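/- Let G be a group normally generated by elements g₁,…,g_m, and let M be the quotient of G by the normal subgroup generated by all commutators [g_i, h·g_i·h⁻¹] for 1 ≤ i ≤ m and h ∈ G. Then M is nilpotent of class at most m; in particular the (m+1)-st term of its lower central series is trivial. -/

import Mathlib

open Subgroup
open scoped commutatorElement

section Aux

variable {M : Type*} [Group M]

lemma myNormal_iSup {ι : Sort*} (A : ι → Subgroup M) (hA : ∀ i, (A i).Normal) :
    (⨆ i, A i).Normal := by
  constructor
  intro n hn gg
  refine Subgroup.iSup_induction A (C := fun n => gg * n * gg⁻¹ ∈ ⨆ i, A i) hn ?_ ?_ ?_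
  · intro i x hx
    exact le_iSup A i ((hA i).conj_mem x hx gg)
  · simpa using (⨆ i, A i).one_mem
  · intro x y hx hy
    have h : gg * (x * y) * gg⁻¹ = (gg * x * gg⁻¹) * (gg * y * gg⁻¹) := by group
    rw [h]; exact mul_mem hx hy

lemma myCommutator_iSup_le {ι : Sort*} (A : ι → Subgroup M) (K : Subgroup M)
    (hA : ∀ i, (A i).Normal) (hK : K.Normal) :
    ⁅⨆ i, A i, K⁆ ≤ ⨆ i, ⁅A i, K⁆ := by
  have hR : (⨆ i, ⁅A i, K⁆).Normal :=
    myNormal_iSup _ fun i => @Subgroup.commutator_normal _ _ _ _ (hA i) hK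
  rw [Subgroup.commutator_le]
  intro g hg
  refine Subgroup.iSup_induction A
    (C := fun g => ∀ k ∈ K, ⁅g, k⁆ ∈ ⨆ i, ⁅A i, K⁆) hg ?_ ?_ ?_
  · intro i x hx k hk
    exact le_iSup (fun i => ⁅A i, K⁆) i (Subgroup.commutator_mem_commutator hx hk)
  · intro k _
    simpa using (⨆ i, ⁅A i, K⁆).one_mem
  · intro x y hx hy k hk
    have h : ⁅x * y, k⁆ = x * ⁅y, k⁆ * x⁻¹ * ⁅x, k⁆ := by
      simp only [commutatorElement_def]; group
    rw [h]
    exact mul_mem (hR.conj_mem _ (hy k hk) x) (hx k hk)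

variable {ι : Type*}

/-- Iterated commutator `⁅…⁅A i_k, A i_{k-1}⁆, …, A i⁆` (head is the outermost factor). -/
def iterComm (A : ι → Subgroup M) : ι → List ι → Subgroup M
  | i, [] => A i
  | i, j :: l => ⁅iterComm A j l, A i⁆

lemma iterComm_normal (A : ι → Subgroup M) (hA : ∀ i, (A i).Normal) :
    ∀ (l : List ι) (i : ι), (iterComm A i l).Normal := by
  intro l
  induction l with
  | nil => intro i; exact hA i
  | cons j l ih =>
    intro i
    exact @Subgroup.commutator_normal _ _ _ _ (ih j) (hA i)

lemma iterComm_le_of_mem (A : ι → Subgroup M) (hA : ∀ i, (A i).Normal) :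
    ∀ (l : List ι) (i j : ι), j ∈ i :: l → iterComm A i l ≤ A j := by
  intro l
  induction l with
  | nil =>
    intro i j hj
    rcases List.mem_singleton.mp hj with rfl
    exact le_rfl
  | cons k l ih =>
    intro i j hj
    rcases List.mem_cons.mp hj with rfl | hj
    · haveI := hA j
      exact Subgroup.commutator_le_right _ _
    · haveI := iterComm_normal A hA l k
      exact (Subgroup.commutator_le_left _ _).trans (ih k j hj)

lemma iterComm_eq_bot (A : ι → Subgroup M) (hA : ∀ i, (A i).Normal)
    (hab : ∀ i, ⁅A i, A i⁆ = ⊥) :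
    ∀ (l : List ι) (i : ι), ¬ (i :: l).Nodup → iterComm A i l = ⊥ := by
  intro l
  induction l with
  | nil => intro i h; exact absurd (List.nodup_singleton i) h
  | cons k l ih =>
    intro i h
    by_cases hi : i ∈ k :: l
    · have h1 : iterComm A k l ≤ A i := iterComm_le_of_mem A hA l k i hi
      have : iterComm A i (k :: l) ≤ ⁅A i, A i⁆ :=
        Subgroup.commutator_mono h1 le_rfl
      rw [hab i] at this
      exact le_bot_iff.mp this
    · have h2 : ¬ (k :: l).Nodup := by
        intro hnd
        exact h (List.nodup_cons.mpr ⟨hi, hnd⟩)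
      show ⁅iterComm A k l, A i⁆ = ⊥
      rw [ih k h2]
      exact Subgroup.commutator_bot_left _

lemma fitting {m : ℕ} (A : Fin m → Subgroup M) (hA : ∀ i, (A i).Normal)
    (hab : ∀ i, ⁅A i, A i⁆ = ⊥) (hsup : ⨆ i, A i = ⊤) :
    (⊤ : Subgroup M).lowerCentralSeries m = ⊥ := by
  have key : ∀ k, (⊤ : Subgroup M).lowerCentralSeries k ≤
      ⨆ p : Fin m × {l : List (Fin m) // l.length = k}, iterComm A p.1 p.2.1 := by
    intro k
    induction k with
    | zero =>
      rw [Subgroup.lowerCentralSeries_zero, ← hsup]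
      refine iSup_le fun i => ?_
      exact le_iSup_of_le ⟨i, ⟨[], rfl⟩⟩ le_rfl
    | succ k ih =>
      have hstep : (⊤ : Subgroup M).lowerCentralSeries (k + 1) = ⁅(⊤ : Subgroup M).lowerCentralSeries k, ⊤⁆ := rfl
      rw [hstep]
      set X : Subgroup M :=
        ⨆ p : Fin m × {l : List (Fin m) // l.length = k}, iterComm A p.1 p.2.1 with hX
      have hXn : X.Normal :=
        myNormal_iSup _ fun p => iterComm_normal A hA p.2.1 p.1
      calc ⁅(⊤ : Subgroup M).lowerCentralSeries k, ⊤⁆ ≤ ⁅X, ⊤⁆ := Subgroup.commutator_mono ih le_rfl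
        _ = ⁅⨆ i, A i, X⁆ := by rw [hsup, Subgroup.commutator_comm]
        _ ≤ ⨆ i, ⁅A i, X⁆ := myCommutator_iSup_le A X hA hXn
        _ ≤ ⨆ p : Fin m × {l : List (Fin m) // l.length = k + 1}, iterComm A p.1 p.2.1 := by
          refine iSup_le fun j => ?_
          rw [Subgroup.commutator_comm]
          have h2 : ⁅X, A j⁆ ≤
              ⨆ p : Fin m × {l : List (Fin m) // l.length = k}, ⁅iterComm A p.1 p.2.1, A j⁆ :=
            myCommutator_iSup_le _ _ (fun p => iterComm_normal A hA p.2.1 p.1) (hA j)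
          refine h2.trans (iSup_le fun p => ?_)
          exact le_iSup_of_le ⟨j, ⟨p.1 :: p.2.1, by simp [p.2.2]⟩⟩ le_rfl
  have last := key m
  rw [le_bot_iff.symm]
  refine last.trans (iSup_le fun p => ?_)
  have hnd : ¬ (p.1 :: p.2.1).Nodup := by
    intro hnd
    have := hnd.length_le_card
    simp [p.2.2] at this
  rw [iterComm_eq_bot A hA hab p.2.1 p.1 hnd]

end Aux

/-- If G is normally generated by g₁,…,g_m, then the Milnor group
M = G / ⟪[gᵢ, h gᵢ h⁻¹]⟫ is nilpotent of class at most m: γ_{m+1}(M) = 1,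
i.e. `lowerCentralSeries M m = ⊥` (Mathlib's `lowerCentralSeries M 0 = ⊤` is γ₁). -/
theorem stmt6 (m : ℕ) (G : Type*) [Group G] (g : Fin m → G)
    (hgen : Subgroup.normalClosure (Set.range g) = ⊤) :
    Subgroup.lowerCentralSeries (⊤ : Subgroup
      (G ⧸ Subgroup.normalClosure
        {x : G | ∃ (i : Fin m) (h : G), x = ⁅g i, h * g i * h⁻¹⁆})) m = ⊥ := by
  set N := Subgroup.normalClosure {x : G | ∃ (i : Fin m) (h : G), x = ⁅g i, h * g i * h⁻¹⁆}
  let f : G →* G ⧸ N := QuotientGroup.mk' N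
  have hf : Function.Surjective f := QuotientGroup.mk'_surjective N
  -- all conjugates of f (g i) commute with each other
  have hconj : ∀ (i : Fin m) (u v : G ⧸ N),
      (u * f (g i) * u⁻¹) * (v * f (g i) * v⁻¹) = (v * f (g i) * v⁻¹) * (u * f (g i) * u⁻¹) := by
    intro i u v
    rw [← commutatorElement_eq_one_iff_mul_comm]
    obtain ⟨w, hw⟩ := hf (u⁻¹ * v)
    have hrel : ⁅f (g i), f w * f (g i) * (f w)⁻¹⁆ = 1 := by
      have h1 : ⁅f (g i), f w * f (g i) * (f w)⁻¹⁆ = f ⁅g i, w * g i * w⁻¹⁆ := by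
        simp only [commutatorElement_def, map_mul, map_inv]
      rw [h1]
      show ((⁅g i, w * g i * w⁻¹⁆ : G) : G ⧸ N) = 1
      rw [QuotientGroup.eq_one_iff]
      exact Subgroup.subset_normalClosure ⟨i, w, rfl⟩
    have key : ⁅u * f (g i) * u⁻¹, v * f (g i) * v⁻¹⁆ =
        u * ⁅f (g i), (u⁻¹ * v) * f (g i) * (u⁻¹ * v)⁻¹⁆ * u⁻¹ := by
      simp only [commutatorElement_def]; group
    rw [key, ← hw, hrel, mul_one, mul_inv_cancel]
  -- the abelian normal subgroups
  set A : Fin m → Subgroup (G ⧸ N) := fun i => Subgroup.normalClosure {f (g i)} with hAdef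
  have hA : ∀ i, (A i).Normal := fun i => Subgroup.normalClosure_normal
  have hmemA : ∀ i x, x ∈ Group.conjugatesOfSet ({f (g i)} : Set (G ⧸ N)) →
      ∃ u, x = u * f (g i) * u⁻¹ := by
    intro i x hx
    rcases Group.mem_conjugatesOfSet_iff.mp hx with ⟨a, ha, hc⟩
    rcases Set.mem_singleton_iff.mp ha with rfl
    rcases isConj_iff.mp hc with ⟨u, hu⟩
    exact ⟨u, hu.symm⟩
  have hab : ∀ i, ⁅A i, A i⁆ = ⊥ := by
    intro i
    rw [Subgroup.commutator_eq_bot_iff_le_centralizer]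
    have hAi : A i = Subgroup.closure (Group.conjugatesOfSet {f (g i)}) := rfl
    rw [hAi]
    set S := Group.conjugatesOfSet ({f (g i)} : Set (G ⧸ N))
    have pair : ∀ a ∈ S, ∀ b ∈ S, b * a = a * b := by
      intro a ha b hb
      obtain ⟨u, rfl⟩ := hmemA i a ha
      obtain ⟨v, rfl⟩ := hmemA i b hb
      exact hconj i v u
    -- closure S ≤ centralizer (closure S)
    intro y hy
    refine Subgroup.mem_centralizer_iff.mpr ?_
    intro z hz
    rw [SetLike.mem_coe] at hz
    -- z ∈ closure S, y ∈ closure S, prove z * y = y * z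
    revert z
    refine Subgroup.closure_induction (fun a ha => ?_) (by simp) ?_ ?_ hy
    · -- y = a ∈ S; show ∀ z ∈ closure S, z * a = a * z
      intro z hz
      refine Subgroup.closure_induction (fun b hb => pair a ha b hb) (by simp) ?_ ?_ hz
      · intro b c _ _ hb hc
        rw [mul_assoc, hc, ← mul_assoc, hb, mul_assoc]
      · intro b _ hb
        calc b⁻¹ * a = b⁻¹ * a * b * b⁻¹ := by group
          _ = b⁻¹ * (b * a) * b⁻¹ := by rw [mul_assoc b⁻¹ a b, ← hb]
          _ = a * b⁻¹ := by group
    · intro a b _ _ ha hb z hz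
      rw [← mul_assoc, ha z hz, mul_assoc, hb z hz, mul_assoc]
    · intro a _ ha z hz
      have h1 := ha z hz
      calc z * a⁻¹ = a⁻¹ * (a * z) * a⁻¹ := by group
        _ = a⁻¹ * (z * a) * a⁻¹ := by rw [h1]
        _ = a⁻¹ * z := by group
  have hsup : ⨆ i, A i = ⊤ := by
    have h1 : Subgroup.map f (Subgroup.normalClosure (Set.range g)) =
        Subgroup.normalClosure (f '' Set.range g) :=
      Subgroup.map_normalClosure _ _ hf
    rw [hgen] at h1
    have h2 : Subgroup.map f ⊤ = ⊤ := by
      rw [Subgroup.map_top_of_surjective f hf]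
    rw [h2] at h1
    haveI := myNormal_iSup A hA
    refine le_antisymm le_top ?_
    rw [h1]
    refine Subgroup.normalClosure_le_normal ?_
    rintro x ⟨y, ⟨i, rfl⟩, rfl⟩
    exact le_iSup A i (Subgroup.subset_normalClosure rfl)
  exact fitting A hA hab hsup
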